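/- Let G be a finite simple graph with adjacency matrix A. For every step t of the Karp–Sipser leaf removal algorithm (which constructs increasing vertex sets 𝒜_t of removed leaves and ℬ_t of removed leaf-neighbors), dim ker A ≥ |𝒜_t| − |ℬ_t|. -/

import Mathlib

open scoped Classical

variable {V : Type*}

/-- One step of the Karp–Sipser leaf removal algorithm: given the current removed sets
`(𝒜, ℬ, P)`, remove pendant leaves together with their neighbors. -/
noncomputable def KSstep [Fintype V] (G : SimpleGraph V) :
    Finset V × Finset V × Finset V → Finset V × Finset V × Finset V :=
  fun T =>
    let A := T.1; let B := T.2.1; let P := T.2.2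
    let R : Finset V := Finset.univ \ (A ∪ B ∪ P)
    let L : Finset V := R.filter fun v => (G.neighborFinset v ∩ R).card = 1
    let W : Finset V := (R \ L).filter fun v => ∃ u ∈ L, G.Adj u v
    (A ∪ L.filter fun u => ∃ v ∈ W, G.Adj u v,
      B ∪ W,
      P ∪ L.filter fun v => ∃ u ∈ L, G.Adj u v)

/-- The Karp–Sipser leaf removal algorithm: `(KS G t) = (𝒜_t, ℬ_t, P_t)`. -/
noncomputable def KS [Fintype V] (G : SimpleGraph V) : ℕ → Finset V × Finset V × Finset V
  | 0 => (Finset.univ.filter fun v => G.degree v = 0, ∅, ∅)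
  | t + 1 => KSstep G (KS G t)

lemma KS_inv [Fintype V] (G : SimpleGraph V) (t : ℕ) :
    (∀ a ∈ (KS G t).1, ∀ y, G.Adj a y → y ∈ (KS G t).2.1) ∧
    (∀ p ∈ (KS G t).2.2, ∀ y, G.Adj p y → y ∈ (KS G t).2.1 ∪ (KS G t).2.2) := by
  induction t with
  | zero =>
    constructor
    · intro a ha y hy
      simp only [KS, Finset.mem_filter] at ha
      have : y ∈ G.neighborFinset a := by simpa using hy
      rw [Finset.card_eq_zero.mp ha.2] at this
      simp at this
    · intro p hp
      simp [KS] at hp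
  | succ t ih =>
    obtain ⟨ih1, ih2⟩ := ih
    set A := (KS G t).1 with hA
    set B := (KS G t).2.1 with hB
    set P := (KS G t).2.2 with hP
    set R : Finset V := Finset.univ \ (A ∪ B ∪ P) with hR
    set L : Finset V := R.filter fun v => (G.neighborFinset v ∩ R).card = 1 with hL
    set W : Finset V := (R \ L).filter fun v => ∃ u ∈ L, G.Adj u v with hW
    have h1 : (KS G (t+1)).1 = A ∪ L.filter fun u => ∃ v ∈ W, G.Adj u v := rfl
    have h2 : (KS G (t+1)).2.1 = B ∪ W := rfl
    have h3 : (KS G (t+1)).2.2 = P ∪ L.filter fun v => ∃ u ∈ L, G.Adj u v := rfl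
    -- key: a leaf's neighbors are either in B or its unique R-neighbor
    have key : ∀ x ∈ L, ∀ y, G.Adj x y → y ∉ R → y ∈ B := by
      intro x hx y hxy hyR
      have hxR : x ∈ R := (Finset.mem_filter.mp hx).1
      have hxAB : x ∉ A ∧ x ∉ B ∧ x ∉ P := by
        have := (Finset.mem_sdiff.mp hxR).2
        simp only [Finset.mem_union] at this
        tauto
      have hy' : y ∈ A ∪ B ∪ P := by
        by_contra h
        exact hyR (Finset.mem_sdiff.mpr ⟨Finset.mem_univ y, h⟩)
      simp only [Finset.mem_union] at hy'
      rcases hy' with (hyA | hyB) | hyP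
      · exact absurd (ih1 y hyA x hxy.symm) hxAB.2.1
      · exact hyB
      · have := ih2 y hyP x hxy.symm
        rcases Finset.mem_union.mp this with h | h
        · exact absurd h hxAB.2.1
        · exact absurd h hxAB.2.2
    have uniq : ∀ x ∈ L, ∀ y z, y ∈ R → z ∈ R → G.Adj x y → G.Adj x z → y = z := by
      intro x hx y z hy hz hxy hxz
      have hcard := (Finset.mem_filter.mp hx).2
      obtain ⟨c, hc⟩ := Finset.card_eq_one.mp hcard
      have h1 : y ∈ G.neighborFinset x ∩ R := by
        simp [Finset.mem_inter, SimpleGraph.mem_neighborFinset, hxy, hy]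
      have h2' : z ∈ G.neighborFinset x ∩ R := by
        simp [Finset.mem_inter, SimpleGraph.mem_neighborFinset, hxz, hz]
      rw [hc] at h1 h2'
      simp at h1 h2'
      rw [h1, h2']
    refine ⟨?_, ?_⟩
    · -- neighbors of new 𝒜 are in new ℬ
      rw [h1, h2]
      intro a ha y hay
      rcases Finset.mem_union.mp ha with haA | haL
      · exact Finset.mem_union_left _ (ih1 a haA y hay)
      · obtain ⟨haL, w, hwW, haw⟩ := by
          simpa using Finset.mem_filter.mp haL
        by_cases hyR : y ∈ R
        · have hwR : w ∈ R := (Finset.mem_sdiff.mp (Finset.mem_filter.mp hwW).1).1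
          have := uniq a haL y w hyR hwR hay haw
          exact this ▸ Finset.mem_union_right _ hwW
        · exact Finset.mem_union_left _ (key a haL y hay hyR)
    · -- neighbors of new P are in new ℬ ∪ new P
      rw [h2, h3]
      intro p hp y hpy
      rcases Finset.mem_union.mp hp with hpP | hpL
      · rcases Finset.mem_union.mp (ih2 p hpP y hpy) with h | h
        · exact Finset.mem_union_left _ (Finset.mem_union_left _ h)
        · exact Finset.mem_union_right _ (Finset.mem_union_left _ h)
      · obtain ⟨hpL, u, huL, hpu⟩ := by
          simpa using Finset.mem_filter.mp hpL
        by_cases hyR : y ∈ R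
        · have huR : u ∈ R := (Finset.mem_filter.mp huL).1
          have hyu : y = u := uniq p hpL y u hyR huR hpy (hpu.symm)
          subst hyu
          refine Finset.mem_union_right _ (Finset.mem_union_right _ ?_)
          exact Finset.mem_filter.mpr ⟨huL, p, hpL, hpu.symm⟩
        · exact Finset.mem_union_left _
            (Finset.mem_union_left _ (key p hpL y hpy hyR))


set_option maxHeartbeats 1000000 in
set_option synthInstance.maxHeartbeats 200000 in
/-- At every step `t` of the Karp–Sipser leaf removal algorithm,
`dim ker A(G) ≥ |𝒜_t| − |ℬ_t|`. -/
theorem dim_ker_ge_leaf_removal [Fintype V] (G : SimpleGraph V) (t : ℕ) :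
    ((KS G t).1.card : ℤ) - ((KS G t).2.1.card : ℤ)
      ≤ (Module.finrank ℝ (LinearMap.ker (Matrix.toLin' (G.adjMatrix ℝ))) : ℤ) := by
  classical
  obtain ⟨h1, -⟩ := KS_inv G t
  set 𝒜 := (KS G t).1 with h𝒜
  set ℬ := (KS G t).2.1 with hℬ
  set f := Matrix.toLin' (G.adjMatrix ℝ) with hf
  set e : V → (V → ℝ) := fun v => Pi.single v 1 with he
  have eLI : LinearIndependent ℝ e := by
    have := (Pi.basisFun ℝ V).linearIndependent
    convert this using 1
    funext v
    simp [he, Pi.basisFun_apply]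
  set U : Submodule ℝ (V → ℝ) :=
    Submodule.span ℝ (Set.range (fun a : {x // x ∈ 𝒜} => e ↑a)) with hU
  set g := f.domRestrict U with hg
  have hUdim : Module.finrank ℝ U = 𝒜.card := by
    rw [hU]
    exact (finrank_span_eq_card
      (eLI.comp (Subtype.val : {x // x ∈ 𝒜} → V) Subtype.val_injective)).trans
      (Fintype.card_coe 𝒜)
  have hrange : Module.finrank ℝ (LinearMap.range g) ≤ ℬ.card := by
    have hle : LinearMap.range g
        ≤ Submodule.span ℝ (Set.range (fun b : {x // x ∈ ℬ} => e ↑b)) := by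
      rw [hg, LinearMap.range_domRestrict, hU, Submodule.map_span, ← Set.range_comp]
      apply Submodule.span_le.mpr
      rintro _ ⟨a, rfl⟩
      obtain ⟨a, ha⟩ := a
      have hcol : f (e a) = ∑ b ∈ ℬ, (G.adjMatrix ℝ) b a • e b := by
        funext j
        have lhs : f (e a) j = (G.adjMatrix ℝ) j a := by
          simp [hf, Matrix.toLin'_apply, Matrix.mulVec, dotProduct, he,
            Pi.single_apply, mul_ite, Finset.sum_ite_eq']
        have step : ∀ b ∈ ℬ, ((G.adjMatrix ℝ) b a • e b) j
            = if b = j then (G.adjMatrix ℝ) b a else 0 := by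
          intro b _
          simp only [Pi.smul_apply, smul_eq_mul, he, Pi.single_apply, mul_ite, mul_one,
            mul_zero]
          exact if_congr eq_comm rfl rfl
        rw [Finset.sum_apply, Finset.sum_congr rfl step,
          Finset.sum_ite_eq' ℬ j (fun b => (G.adjMatrix ℝ) b a), lhs]
        by_cases hj : j ∈ ℬ
        · simp [hj]
        · have hadj : ¬ G.Adj j a := fun h => hj (h1 a ha j h.symm)
          simp [hj, SimpleGraph.adjMatrix_apply, hadj]
      show f (e a) ∈ _
      rw [hcol]
      refine Submodule.sum_mem _ fun b hb => Submodule.smul_mem _ _ ?_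
      exact Submodule.subset_span ⟨⟨b, hb⟩, rfl⟩
    calc Module.finrank ℝ (LinearMap.range g)
        ≤ Module.finrank ℝ (Submodule.span ℝ
            (Set.range (fun b : {x // x ∈ ℬ} => e ↑b))) := Submodule.finrank_mono hle
      _ ≤ Fintype.card {x // x ∈ ℬ} := by
          simpa [Set.finrank] using
            finrank_range_le_card (R := ℝ) (fun b : {x // x ∈ ℬ} => e ↑b)
      _ = ℬ.card := Fintype.card_coe ℬ
  have hker : Module.finrank ℝ (LinearMap.ker g) ≤ Module.finrank ℝ (LinearMap.ker f) := by
    have hmap : (LinearMap.ker g).map U.subtype ≤ LinearMap.ker f := by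
      intro x hx
      obtain ⟨y, hy, rfl⟩ := Submodule.mem_map.mp hx
      simpa [hg, LinearMap.mem_ker] using hy
    have heq : Module.finrank ℝ (LinearMap.ker g)
        = Module.finrank ℝ ((LinearMap.ker g).map U.subtype) :=
      (Submodule.equivMapOfInjective U.subtype U.injective_subtype
        (LinearMap.ker g)).finrank_eq
    rw [heq]
    exact Submodule.finrank_mono hmap
  have hrn := LinearMap.finrank_range_add_finrank_ker g
  rw [hUdim] at hrn
  have hnat : 𝒜.card ≤ ℬ.card + Module.finrank ℝ (LinearMap.ker f) := by omega
  have hint : (𝒜.card : ℤ) ≤ (ℬ.card : ℤ) + (Module.finrank ℝ (LinearMap.ker f) : ℤ) := by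
    exact_mod_cast hnat
  linarith
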